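/- arXiv:2312.00379 — 4 statements merged into one kernel-verified Lean document; each statement's English description precedes it below -/
import Mathlib

section
/- Let $V = \{v_1, \dots, v_{3t}\}$ and consider the $t$ queries $Q = \{(v_{3i+1}, v_{3i+2}, v_{3i+3}) : 0 \leq i < t\}$. For every binary labeling of $Q$ there exists a partition of $V$ into two classes $C_1, C_2$ such that, defining $\rho_C(x, y) = 0$ if $x, y$ are in the same class and $1$ otherwise, each query $(a, b, c)$ labeled 'b positive' satisfies $\rho_C(a, b) < \rho_C(a, c)$ and each query labeled 'c positive' satisfies $\rho_C(a, c) < \rho_C(a, b)$. Hence the VC dimension of contrastive learning with class-indicator distances on $n = 3t$ points is at least $n/3$. -/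
theorem stmt_15 (t : ℕ) (f : ℕ → Bool) :
    ∃ c : ℕ → Bool, ∀ i < t,
      (f i = true →
        (if c (3 * i) = c (3 * i + 1) then (0 : ℝ) else 1) <
          (if c (3 * i) = c (3 * i + 2) then 0 else 1)) ∧
      (f i = false →
        (if c (3 * i) = c (3 * i + 2) then (0 : ℝ) else 1) <
          (if c (3 * i) = c (3 * i + 1) then 0 else 1)) := by
  refine ⟨fun n => if n % 3 = 0 then true else if n % 3 = 1 then f (n / 3) else !f (n / 3), fun i _ => ?_⟩
  have h0 : (3 * i) % 3 = 0 := by omega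
  have h1 : (3 * i + 1) % 3 = 1 := by omega
  have h2 : (3 * i + 2) % 3 = 2 := by omega
  have d1 : (3 * i + 1) / 3 = i := by omega
  have d2 : (3 * i + 2) / 3 = i := by omega
  simp only [h0, h1, h2, d1, d2]
  constructor <;> intro hf <;> simp [hf] <;> norm_num
end

section
/- Let $V$ be a finite set of size $n$ and consider any collection of $k \geq n$ labeled class-distance samples, where each labeled sample $(x_i, y_i^+, z_i^-)$ asserts that $x_i$ and $y_i$ are in the same class while $x_i$ and $z_i$ are in different classes. Build a graph $G$ on $V$ with an edge $\{x_i, y_i\}$ for each sample. If $G$ contains a cycle through an edge $\{x, y\}$, then flipping the label of the sample corresponding to $\{x, y\}$ (asserting instead that $x, z$ are in the same class and $x, y$ in different classes) yields an unsatisfiable labeling: no partition of $V$ into classes is consistent with all labeled samples. Hence the VC dimension of contrastive learning with class-indicator distances is at most $n$. -/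
theorem stmt_16 {V : Type*} (k : ℕ) (x y z : Fin k → V) (i₀ : Fin k)
    (t : ℕ) (w : ℕ → V) (hw0 : w 0 = x i₀) (hwt : w t = y i₀)
    (hpath : ∀ s < t, ∃ j : Fin k, j ≠ i₀ ∧
      ((w s = x j ∧ w (s + 1) = y j) ∨ (w s = y j ∧ w (s + 1) = x j))) :
    ¬ ∃ c : V → ℕ,
      (∀ j : Fin k, j ≠ i₀ → c (x j) = c (y j) ∧ c (x j) ≠ c (z j)) ∧
      (c (x i₀) = c (z i₀) ∧ c (x i₀) ≠ c (y i₀)) := by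
  rintro ⟨c, hsat, -, hne⟩
  have key : ∀ s ≤ t, c (w 0) = c (w s) := by
    intro s hs
    induction s with
    | zero => rfl
    | succ n ih =>
      have hn : n < t := Nat.lt_of_succ_le hs
      obtain ⟨j, hj, h⟩ := hpath n hn
      have := (hsat j hj).1
      rcases h with ⟨h1, h2⟩ | ⟨h1, h2⟩ <;>
        rw [ih (le_of_lt hn), h1, h2] <;> [exact this; exact this.symm]
  exact hne (by rw [← hw0, ← hwt]; exact key t le_rfl)
end

section
/- Let $\Delta$ be a class of distance functions such that for any finite set $S$, any $\rho \in \Delta$ on $S$, and any new point $o$, there exists $\rho' \in \Delta$ on $S \cup \{o\}$ extending $\rho$ with $\rho'(x, y) < \rho'(x, o)$ for all $x, y \in S$. Let $Q = \{(x_i, y_i, z_i)\}_{i=1}^m$ be a set of triplet queries on a point set $S$ of size $n - k + 1$ that is VC-shattered by $\Delta$. Then, adding $k - 1$ new 'outlier' points $o_1, \dots, o_{k-1}$, the set of $(k+2)$-tuples $Q' = \{(x_i, y_i, z_i, o_1, \dots, o_{k-1})\}_{i=1}^m$ is Natarajan-shattered (with the per-query label pair being 'positive is $y_i$' vs 'positive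 is $z_i$') by contrastive learning with $k$ negatives over $\Delta$. -/
lemma aux_ext {V : Type*} [DecidableEq V]
    (Δ : Finset V → Set (V → V → ℝ))
    (hext : ∀ (S : Finset V) (ρ : V → V → ℝ), ρ ∈ Δ S → ∀ o ∉ S,
      ∃ ρ' ∈ Δ (insert o S), (∀ x ∈ S, ∀ y ∈ S, ρ' x y = ρ x y) ∧
        (∀ x ∈ S, ∀ y ∈ S, ρ' x y < ρ' x o)) :
    ∀ (T S : Finset V) (ρ : V → V → ℝ), ρ ∈ Δ S → (∀ t ∈ T, t ∉ S) →
      ∃ ρ' ∈ Δ (S ∪ T), (∀ x ∈ S, ∀ y ∈ S, ρ' x y = ρ x y) ∧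
        ∀ x ∈ S, ∀ y ∈ S, ∀ t ∈ T, ρ' x y < ρ' x t := by
  intro T
  induction T using Finset.induction_on with
  | empty =>
    intro S ρ hρ _
    exact ⟨ρ, by simpa using hρ, fun _ _ _ _ => rfl, fun _ _ _ _ t ht => absurd ht (by simp)⟩
  | @insert a T haT ih =>
    intro S ρ hρ hdisj
    obtain ⟨ρ₁, hρ₁, heq₁, hlt₁⟩ := ih S ρ hρ (fun t ht => hdisj t (Finset.mem_insert_of_mem ht))
    have haS : a ∉ S ∪ T := by
      simp only [Finset.mem_union, not_or]
      exact ⟨hdisj a (Finset.mem_insert_self a T), haT⟩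
    obtain ⟨ρ₂, hρ₂, heq₂, hlt₂⟩ := hext (S ∪ T) ρ₁ hρ₁ a haS
    refine ⟨ρ₂, ?_, ?_, ?_⟩
    · have : insert a (S ∪ T) = S ∪ insert a T := by
        ext v; simp [Finset.mem_insert, Finset.mem_union, or_left_comm]
      rwa [this] at hρ₂
    · intro u hu v hv
      rw [heq₂ u (Finset.mem_union_left _ hu) v (Finset.mem_union_left _ hv),
        heq₁ u hu v hv]
    · intro u hu v hv t ht
      rcases Finset.mem_insert.mp ht with rfl | ht
      · exact hlt₂ u (Finset.mem_union_left _ hu) v (Finset.mem_union_left _ hv)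
      · rw [heq₂ u (Finset.mem_union_left _ hu) v (Finset.mem_union_left _ hv),
          heq₂ u (Finset.mem_union_left _ hu) t (Finset.mem_union_right _ ht)]
        exact hlt₁ u hu v hv t ht

theorem stmt_17 {V : Type*} [DecidableEq V]
    (Δ : Finset V → Set (V → V → ℝ))
    (hext : ∀ (S : Finset V) (ρ : V → V → ℝ), ρ ∈ Δ S → ∀ o ∉ S,
      ∃ ρ' ∈ Δ (insert o S), (∀ x ∈ S, ∀ y ∈ S, ρ' x y = ρ x y) ∧
        (∀ x ∈ S, ∀ y ∈ S, ρ' x y < ρ' x o))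
    (m k : ℕ) (hk : 1 ≤ k)
    (S : Finset V) (x y z : Fin m → V)
    (hx : ∀ i, x i ∈ S) (hy : ∀ i, y i ∈ S) (hz : ∀ i, z i ∈ S)
    (hshatter : ∀ f : Fin m → Bool, ∃ ρ ∈ Δ S, ∀ i,
      (f i = true → ρ (x i) (y i) < ρ (x i) (z i)) ∧
      (f i = false → ρ (x i) (z i) < ρ (x i) (y i)))
    (o : Fin (k - 1) → V) (ho : Function.Injective o) (hoS : ∀ j, o j ∉ S) :
    ∀ f : Fin m → Bool, ∃ ρ ∈ Δ (S ∪ Finset.image o Finset.univ), ∀ i,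
      (f i = true → ρ (x i) (y i) < ρ (x i) (z i) ∧
        ∀ j, ρ (x i) (y i) < ρ (x i) (o j)) ∧
      (f i = false → ρ (x i) (z i) < ρ (x i) (y i) ∧
        ∀ j, ρ (x i) (z i) < ρ (x i) (o j)) := by
  intro f
  obtain ⟨ρ, hρ, hf⟩ := hshatter f
  obtain ⟨ρ', hρ', heq, hlt⟩ := aux_ext Δ hext (Finset.image o Finset.univ) S ρ hρ
    (by intro t ht; obtain ⟨j, _, rfl⟩ := Finset.mem_image.mp ht; exact hoS j)
  have hmem : ∀ j, o j ∈ Finset.image o Finset.univ := fun j =>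
    Finset.mem_image_of_mem o (Finset.mem_univ j)
  refine ⟨ρ', hρ', fun i => ⟨fun ht => ?_, fun hfls => ?_⟩⟩
  · constructor
    · rw [heq _ (hx i) _ (hy i), heq _ (hx i) _ (hz i)]; exact (hf i).1 ht
    · exact fun j => hlt _ (hx i) _ (hy i) _ (hmem j)
  · constructor
    · rw [heq _ (hx i) _ (hz i), heq _ (hx i) _ (hy i)]; exact (hf i).2 hfls
    · exact fun j => hlt _ (hx i) _ (hz i) _ (hmem j)
end

section
/- For all integers $n \geq 2$ and $m, k$ with $k \leq 2n - 1$, if $m \geq 3 n \log_2 n$ and $n$ is sufficiently large, then $2 (2n)^{2n-2} \cdot (4 e m / k)^{k} < 2^m$. -/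
set_option maxHeartbeats 4000000

/-- Monotonicity of `k ↦ k * log (a / k)` up to `a / e`, elementary form. -/
lemma keyMono (a k K : ℝ) (hk : 1 ≤ k) (hkK : k ≤ K) (ha : Real.exp 1 * K ≤ a) :
    k * Real.log (a / k) ≤ K * Real.log (a / K) := by
  have hk0 : (0:ℝ) < k := by linarith
  have hK0 : (0:ℝ) < K := by linarith
  have ha0 : (0:ℝ) < a := lt_of_lt_of_le (by positivity) ha
  rw [Real.log_div ha0.ne' hk0.ne', Real.log_div ha0.ne' hK0.ne']
  have h1 : Real.log (K / k) ≤ K / k - 1 := Real.log_le_sub_one_of_pos (by positivity)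
  have h2 : Real.log (K / k) = Real.log K - Real.log k := Real.log_div hK0.ne' hk0.ne'
  have h3 : Real.log K + 1 ≤ Real.log a := by
    have h4 : Real.log (Real.exp 1 * K) ≤ Real.log a := Real.log_le_log (by positivity) ha
    rw [Real.log_mul (Real.exp_pos 1).ne' hK0.ne', Real.log_exp] at h4
    linarith
  have h5 : k * (Real.log K - Real.log k) ≤ K - k := by
    rw [← h2]
    calc k * Real.log (K / k) ≤ k * (K / k - 1) := by nlinarith
      _ = K - k := by field_simp
  nlinarith [mul_le_mul_of_nonneg_left h3 (by linarith : (0:ℝ) ≤ K - k)]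

theorem stmt_19 : ∃ N : ℕ, ∀ n : ℕ, N ≤ n → 2 ≤ n →
    ∀ m k : ℕ, 1 ≤ k → k ≤ 2 * n - 1 → 3 * n * Real.logb 2 n ≤ m →
      2 * (2 * n : ℝ) ^ (2 * n - 2) * (4 * Real.exp 1 * m / k) ^ k < 2 ^ m := by
  use 2 ^ 100
  intro n hNn hn2 m k hk1 hk2n hm
  have he : (2.7:ℝ) ≤ Real.exp 1 := le_of_lt (by
    have := Real.exp_one_gt_d9; norm_num at this ⊢; linarith)
  have hl2 : (0.69:ℝ) ≤ Real.log 2 := le_of_lt (by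
    have := Real.log_two_gt_d9; norm_num at this ⊢; linarith)
  have hl2' : Real.log 2 ≤ 1 := by
    have := Real.log_le_sub_one_of_pos (by norm_num : (0:ℝ) < 2); linarith
  have hl2pos : (0:ℝ) < Real.log 2 := by linarith
  have hn0 : (0:ℝ) < (n:ℝ) := by positivity
  have hn2' : (2:ℝ) ≤ (n:ℝ) := by exact_mod_cast hn2
  -- from n ≥ 2^100 derive log n ≥ 69, then forget the big numeral
  have hL : (69:ℝ) ≤ Real.log (n:ℝ) := by
    have hnN : (2:ℝ) ^ (100:ℕ) ≤ (n:ℝ) := by exact_mod_cast hNn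
    have h1 : Real.log ((2:ℝ) ^ (100:ℕ)) ≤ Real.log (n:ℝ) :=
      Real.log_le_log (by positivity) hnN
    rw [Real.log_pow] at h1
    push_cast at h1
    linarith
  clear hNn
  set e := Real.exp 1 with he_def
  have he1 : (1:ℝ) ≤ e := by linarith
  set L := Real.log (n:ℝ) with hL_def
  -- m as a real, and the lower bound m₀
  set M := (m:ℝ) with hM_def
  set m₀ : ℝ := 3 * (n:ℝ) * L / Real.log 2 with hm₀_def
  have hm0pos : 0 < m₀ := by positivity
  have hm0M : m₀ ≤ M := by
    have h0 : Real.logb 2 (n:ℝ) = L / Real.log 2 := by rw [Real.logb, hL_def]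
    rw [h0] at hm
    rw [hm₀_def]
    calc 3 * (n:ℝ) * L / Real.log 2 = 3 * (n:ℝ) * (L / Real.log 2) := by ring
      _ ≤ M := hm
  have hnM : (n:ℝ) ≤ M := by
    have h1 : (n:ℝ) ≤ m₀ := by
      rw [hm₀_def, le_div_iff₀ hl2pos]
      nlinarith
    linarith
  have hMpos : (0:ℝ) < M := by linarith
  have hM1 : (1:ℝ) ≤ M := by linarith
  -- the cap K on k
  have hk1' : (1:ℝ) ≤ (k:ℝ) := by exact_mod_cast hk1
  have hkpos : (0:ℝ) < (k:ℝ) := by linarith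
  have hkK : (k:ℝ) ≤ 2 * (n:ℝ) - 1 := by
    have h1 : ((k:ℕ):ℝ) ≤ ((2 * n - 1 : ℕ):ℝ) := by exact_mod_cast hk2n
    have h2 : ((2 * n - 1 : ℕ):ℝ) = 2 * (n:ℝ) - 1 := by
      have h3 : (1:ℕ) ≤ 2 * n := by omega
      push_cast [h3]
      ring
    linarith
  set K : ℝ := 2 * (n:ℝ) - 1 with hK_def
  have hKpos : (0:ℝ) < K := by rw [hK_def]; linarith
  have hnK : (n:ℝ) ≤ K := by rw [hK_def]; linarith
  have hK2n : K ≤ 2 * (n:ℝ) := by rw [hK_def]; linarith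
  -- positivity of LHS
  have hLHSpos : (0:ℝ) < 2 * (2 * (n:ℝ)) ^ (2 * n - 2) * (4 * e * M / (k:ℝ)) ^ k := by
    positivity
  -- reduce to a log inequality
  have hmain : Real.log (2 * (2 * (n:ℝ)) ^ (2 * n - 2) * (4 * e * M / (k:ℝ)) ^ k)
      < M * Real.log 2 := by
    rw [Real.log_mul (by positivity) (by positivity),
        Real.log_mul (by norm_num) (by positivity),
        Real.log_pow, Real.log_pow]
    -- Bound the tree-count term
    have hA : ((2 * n - 2 : ℕ):ℝ) * Real.log (2 * (n:ℝ))
        ≤ 2 * (n:ℝ) * Real.log (2 * (n:ℝ)) := by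
      have h1 : ((2 * n - 2 : ℕ):ℝ) ≤ 2 * (n:ℝ) := by
        have h0 : (2 * n - 2 : ℕ) ≤ 2 * n := by omega
        exact_mod_cast h0
      have h2 : 0 ≤ Real.log (2 * (n:ℝ)) := Real.log_nonneg (by linarith)
      nlinarith
    -- Bound the Warren term using keyMono
    have hB : (k:ℝ) * Real.log (4 * e * M / (k:ℝ)) ≤ K * Real.log (4 * e * M / K) := by
      apply keyMono _ _ _ hk1' hkK
      rw [← he_def, hK_def]
      nlinarith [mul_le_mul_of_nonneg_left hnM (by linarith : (0:ℝ) ≤ e),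
        mul_nonneg (by linarith : (0:ℝ) ≤ e) hMpos.le]
    have hC : K * Real.log (4 * e * M / K) ≤ 2 * (n:ℝ) * Real.log (4 * e * M / (n:ℝ)) := by
      have h1 : 4 * e * M / K ≤ 4 * e * M / (n:ℝ) :=
        div_le_div_of_nonneg_left (by positivity) hn0 hnK
      have h2 : (1:ℝ) ≤ 4 * e * M / K := by
        rw [le_div_iff₀ hKpos, hK_def]
        nlinarith [mul_le_mul_of_nonneg_left hnM (by linarith : (0:ℝ) ≤ e),
          mul_nonneg (by linarith : (0:ℝ) ≤ e) hMpos.le]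
      have h3 : 0 ≤ Real.log (4 * e * M / K) := Real.log_nonneg h2
      have h4 : Real.log (4 * e * M / K) ≤ Real.log (4 * e * M / (n:ℝ)) :=
        Real.log_le_log (by positivity) h1
      nlinarith
    -- combine the two logs
    have hD : Real.log (2 * (n:ℝ)) + Real.log (4 * e * M / (n:ℝ)) = Real.log (8 * e * M) := by
      rw [← Real.log_mul (by positivity) (by positivity)]
      congr 1
      field_simp
      ring
    have hE : Real.log (8 * e * M) = Real.log (8 * e) + Real.log M :=
      Real.log_mul (by positivity) (by positivity)
    -- log(8e) ≤ 4
    have hI1 : Real.log (8 * e) ≤ 4 := by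
      have h0 : (2.7:ℝ) ^ (3:ℕ) ≤ e ^ (3:ℕ) := pow_le_pow_left₀ (by norm_num) he 3
      have h1 : 8 * e ≤ e ^ (4:ℕ) := by
        calc 8 * e ≤ e ^ (3:ℕ) * e :=
              mul_le_mul_of_nonneg_right (by nlinarith) (by linarith)
          _ = e ^ (4:ℕ) := by ring
      have h2 : Real.log (8 * e) ≤ Real.log (e ^ (4:ℕ)) := Real.log_le_log (by positivity) h1
      rw [Real.log_pow, he_def, Real.log_exp] at h2
      norm_num at h2
      linarith
    -- log M ≤ log m₀ + (M - m₀)/m₀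
    have hF : Real.log M ≤ Real.log m₀ + (M - m₀) / m₀ := by
      have h1 : Real.log (M / m₀) ≤ M / m₀ - 1 := Real.log_le_sub_one_of_pos (by positivity)
      rw [Real.log_div hMpos.ne' hm0pos.ne'] at h1
      have h2 : M / m₀ - 1 = (M - m₀) / m₀ := by field_simp
      linarith
    -- log m₀ ≤ 2 + log n + log L
    have hG : Real.log m₀ ≤ 2 + L + Real.log L := by
      have hLpos : (0:ℝ) < L := by linarith
      have h1 : m₀ ≤ 5 * ((n:ℝ) * L) := by
        rw [hm₀_def, div_le_iff₀ hl2pos]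
        have hnL0 : (0:ℝ) ≤ (n:ℝ) * L := mul_nonneg hn0.le hLpos.le
        nlinarith [mul_le_mul_of_nonneg_left hl2 hnL0]
      have h2 : Real.log m₀ ≤ Real.log (5 * ((n:ℝ) * L)) := Real.log_le_log hm0pos h1
      rw [Real.log_mul (by norm_num) (by positivity),
          Real.log_mul hn0.ne' hLpos.ne'] at h2
      have h3 : Real.log 5 ≤ 2 := by
        have h4 : (5:ℝ) ≤ e ^ (2:ℕ) := by nlinarith [he]
        have h5 : Real.log 5 ≤ Real.log (e ^ (2:ℕ)) := Real.log_le_log (by norm_num) h4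
        rw [Real.log_pow, he_def, Real.log_exp] at h5
        norm_num at h5
        linarith
      rw [← hL_def] at h2
      linarith
    -- log L ≤ L / 4
    have hK2 : Real.log L ≤ L / 4 := by
      have hLpos : (0:ℝ) < L := by linarith
      have h1 : Real.log L = 2 * Real.log (Real.sqrt L) := by
        rw [Real.log_sqrt hLpos.le]; ring
      have h2 : Real.log (Real.sqrt L) ≤ Real.sqrt L := by
        have := Real.log_le_sub_one_of_pos (Real.sqrt_pos.mpr hLpos)
        linarith
      have h3 : Real.sqrt L ≤ L / 8 := by
        have h4 : L ≤ (L / 8) ^ 2 := by nlinarith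
        calc Real.sqrt L ≤ Real.sqrt ((L / 8) ^ 2) := Real.sqrt_le_sqrt h4
          _ = L / 8 := Real.sqrt_sq (by linarith)
      linarith
    -- 2n(M-m₀)/m₀ ≤ (log2/2)(M-m₀)
    have hMm : (0:ℝ) ≤ M - m₀ := by linarith
    have hJ : 2 * (n:ℝ) * ((M - m₀) / m₀) ≤ Real.log 2 / 2 * (M - m₀) := by
      have hkey : 2 * (n:ℝ) / m₀ ≤ Real.log 2 / 2 := by
        rw [div_le_iff₀ hm0pos, hm₀_def]
        have hq : Real.log 2 / 2 * (3 * (n:ℝ) * L / Real.log 2) = 3 * (n:ℝ) * L / 2 := by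
          field_simp
        rw [hq]
        have := mul_le_mul_of_nonneg_left hL hn0.le
        nlinarith [this, hn0.le]
      have he1' : 2 * (n:ℝ) * ((M - m₀) / m₀) = (2 * (n:ℝ) / m₀) * (M - m₀) := by ring
      rw [he1']
      exact mul_le_mul_of_nonneg_right hkey hMm
    -- final assembly
    have hm0log : m₀ * Real.log 2 = 3 * (n:ℝ) * L := by
      rw [hm₀_def]; exact div_mul_cancel₀ _ hl2pos.ne'
    have hMlog : M * Real.log 2 = m₀ * Real.log 2 + (M - m₀) * Real.log 2 := by ring
    have htail : Real.log 2 / 2 * (M - m₀) ≤ (M - m₀) * Real.log 2 := by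
      nlinarith [mul_nonneg hMm hl2pos.le]
    -- multiply scalar bounds by 2n ≥ 0
    have h2n : (0:ℝ) ≤ 2 * (n:ℝ) := by linarith
    have hImul : 2 * (n:ℝ) * Real.log (8 * e) ≤ 2 * (n:ℝ) * 4 :=
      mul_le_mul_of_nonneg_left hI1 h2n
    have hFmul : 2 * (n:ℝ) * Real.log M
        ≤ 2 * (n:ℝ) * (2 + L + Real.log L) + 2 * (n:ℝ) * ((M - m₀) / m₀) := by
      have h6 := mul_le_mul_of_nonneg_left hF h2n
      have h7 := mul_le_mul_of_nonneg_left hG h2n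
      nlinarith
    have hK2mul : 2 * (n:ℝ) * Real.log L ≤ 2 * (n:ℝ) * (L / 4) :=
      mul_le_mul_of_nonneg_left hK2 h2n
    have hDmul : 2 * (n:ℝ) * Real.log (2 * (n:ℝ)) + 2 * (n:ℝ) * Real.log (4 * e * M / (n:ℝ))
        = 2 * (n:ℝ) * Real.log (8 * e * M) := by rw [← hD]; ring
    have hEmul : 2 * (n:ℝ) * Real.log (8 * e * M)
        = 2 * (n:ℝ) * Real.log (8 * e) + 2 * (n:ℝ) * Real.log M := by rw [hE]; ring
    have hMm0log : (0:ℝ) ≤ (M - m₀) * Real.log 2 := mul_nonneg hMm hl2pos.le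
    have hnL : 69 * (n:ℝ) ≤ (n:ℝ) * L := by
      have := mul_le_mul_of_nonneg_left hL hn0.le
      linarith
    -- final numeric
    linarith [hA, hB, hC, hDmul, hEmul, hImul, hFmul, hK2mul, hJ, htail, hm0log, hMlog,
      hMm0log, hnL, hl2', hn2']
  -- conclude
  calc 2 * (2 * (n:ℝ)) ^ (2 * n - 2) * (4 * e * M / (k:ℝ)) ^ k
      = Real.exp (Real.log (2 * (2 * (n:ℝ)) ^ (2 * n - 2) * (4 * e * M / (k:ℝ)) ^ k)) :=
        (Real.exp_log hLHSpos).symm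
    _ < Real.exp (M * Real.log 2) := Real.exp_lt_exp.mpr hmain
    _ = 2 ^ m := by
        rw [hM_def, Real.exp_nat_mul, Real.exp_log (by norm_num : (0:ℝ) < 2)]
end
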